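/- Let ξ > 0, M ≥ 0 be reals, let G be a bipartite graph with parts X and Y, and let f : Y → [0, M]. Suppose G is ξ-poor, i.e., at most ξ·|Y| vertices y ∈ Y have more than (1/4 + ξ)·|X|·|Y| two-edge walks of G starting at y (a two-edge walk from y is a pair (x, y') with x adjacent to both y and y', where y' = y is allowed). Define a ≥ 0 by ∑_{y∈Y} f(y)² = |Y|·a², and define g : X → ℝ by g(x) = ∑_{y ∈ N(x)} f(y). Then ∑_{x∈X} g(x)² ≤ ((1/4 + ξ)·a² + ξ·M²)·|X|·|Y|². -/

import Mathlib

/-- Lemma 5.1 (the Cauchy–Schwarz lemma for ξ-poor bipartite graphs). -/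
theorem stmt_0 {X Y : Type*} [Fintype X] [Fintype Y] [Nonempty X] [Nonempty Y]
    (A : X → Y → Prop) [∀ x, DecidablePred (A x)]
    (ξ M : ℝ) (hξ : 0 < ξ) (hM : 0 ≤ M)
    (f : Y → ℝ) (hf : ∀ y, f y ∈ Set.Icc (0 : ℝ) M)
    (a : ℝ) (ha : 0 ≤ a)
    (haa : ∑ y : Y, (f y) ^ 2 = (Fintype.card Y : ℝ) * a ^ 2)
    -- `G` is ξ-poor: at most ξ|Y| vertices `y ∈ Y` admit more than (1/4+ξ)|X||Y|
    -- two-edge walks starting at `y`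
    (hpoor :
      ((Finset.univ.filter (fun y : Y =>
          ((1/4 + ξ) * (Fintype.card X : ℝ) * (Fintype.card Y : ℝ)) <
            ∑ x ∈ Finset.univ.filter (fun x : X => A x y),
              ((Finset.univ.filter (fun y' : Y => A x y')).card : ℝ))).card : ℝ)
        ≤ ξ * (Fintype.card Y : ℝ)) :
    ∑ x : X, (∑ y ∈ Finset.univ.filter (fun y : Y => A x y), f y) ^ 2
      ≤ ((1/4 + ξ) * a ^ 2 + ξ * M ^ 2) * (Fintype.card X : ℝ) *
          (Fintype.card Y : ℝ) ^ 2 := by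
  classical
  set nX : ℝ := (Fintype.card X : ℝ) with hnXdef
  set nY : ℝ := (Fintype.card Y : ℝ) with hnYdef
  have hnX : (0:ℝ) ≤ nX := Nat.cast_nonneg _
  have hnY : (0:ℝ) ≤ nY := Nat.cast_nonneg _
  set W : Y → ℝ := fun y => ∑ x ∈ Finset.univ.filter (fun x : X => A x y),
      ((Finset.univ.filter (fun y' : Y => A x y')).card : ℝ) with hWdef
  have hW0 : ∀ y, 0 ≤ W y := fun y => Finset.sum_nonneg fun _ _ => Nat.cast_nonneg _
  have hWle : ∀ y, W y ≤ nX * nY := by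
    intro y
    calc W y ≤ ∑ _x ∈ Finset.univ.filter (fun x : X => A x y), nY :=
          Finset.sum_le_sum fun x _ => by
            exact_mod_cast Nat.cast_le.mpr (Finset.card_filter_le _ _)
      _ = ((Finset.univ.filter (fun x : X => A x y)).card : ℝ) * nY := by
          rw [Finset.sum_const, nsmul_eq_mul]
      _ ≤ nX * nY := by
          have : ((Finset.univ.filter (fun x : X => A x y)).card : ℝ) ≤ nX := by
            exact_mod_cast Nat.cast_le.mpr (Finset.card_filter_le _ _)
          exact mul_le_mul_of_nonneg_right this hnY
  -- Step 1: Cauchy–Schwarz and double counting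
  have step1 : ∑ x : X, (∑ y ∈ Finset.univ.filter (fun y : Y => A x y), f y) ^ 2
      ≤ ∑ y : Y, f y ^ 2 * W y := by
    have h1 : ∀ x : X, (∑ y ∈ Finset.univ.filter (fun y : Y => A x y), f y) ^ 2
        ≤ ((Finset.univ.filter (fun y : Y => A x y)).card : ℝ) *
          ∑ y ∈ Finset.univ.filter (fun y : Y => A x y), f y ^ 2 :=
      fun x => sq_sum_le_card_mul_sum_sq
    calc ∑ x : X, (∑ y ∈ Finset.univ.filter (fun y : Y => A x y), f y) ^ 2
        ≤ ∑ x : X, ((Finset.univ.filter (fun y : Y => A x y)).card : ℝ) *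
            ∑ y ∈ Finset.univ.filter (fun y : Y => A x y), f y ^ 2 :=
          Finset.sum_le_sum fun x _ => h1 x
      _ = ∑ y : Y, f y ^ 2 * W y := by
          simp only [Finset.mul_sum, hWdef, Finset.sum_mul]
          rw [show (∑ x : X, ∑ y ∈ Finset.univ.filter (fun y : Y => A x y),
              ((Finset.univ.filter (fun y' : Y => A x y')).card : ℝ) * f y ^ 2)
              = ∑ x : X, ∑ y : Y, if A x y then
                ((Finset.univ.filter (fun y' : Y => A x y')).card : ℝ) * f y ^ 2 else 0 by
            refine Finset.sum_congr rfl fun x _ => ?_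
            rw [Finset.sum_filter]]
          rw [Finset.sum_comm]
          refine Finset.sum_congr rfl fun y _ => ?_
          rw [← Finset.sum_filter]
          refine Finset.sum_congr rfl fun x _ => mul_comm _ _
  -- Step 2: split into good and bad vertices
  set p : Y → Prop := fun y => ((1/4 + ξ) * nX * nY) < W y with hpdef
  have hsplit : ∑ y : Y, f y ^ 2 * W y
      ≤ (1/4 + ξ) * nX * nY * (nY * a ^ 2) + (ξ * nY) * (M ^ 2 * (nX * nY)) := by
    rw [← Finset.sum_filter_add_sum_filter_not Finset.univ p (fun y => f y ^ 2 * W y)]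
    have hbad : ∑ y ∈ Finset.univ.filter p, f y ^ 2 * W y
        ≤ (ξ * nY) * (M ^ 2 * (nX * nY)) := by
      calc ∑ y ∈ Finset.univ.filter p, f y ^ 2 * W y
          ≤ ∑ _y ∈ Finset.univ.filter p, M ^ 2 * (nX * nY) := by
            refine Finset.sum_le_sum fun y _ => ?_
            have hfy := hf y
            have h1 : f y ^ 2 ≤ M ^ 2 := by
              have := hfy.1; have := hfy.2; nlinarith
            have h2 := hWle y
            have h3 := hW0 y
            have h4 : (0:ℝ) ≤ f y ^ 2 := sq_nonneg _
            nlinarith [sq_nonneg M]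
        _ = ((Finset.univ.filter p).card : ℝ) * (M ^ 2 * (nX * nY)) := by
            rw [Finset.sum_const, nsmul_eq_mul]
        _ ≤ (ξ * nY) * (M ^ 2 * (nX * nY)) := by
            refine mul_le_mul_of_nonneg_right hpoor ?_
            positivity
    have hgood : ∑ y ∈ Finset.univ.filter (fun y => ¬ p y), f y ^ 2 * W y
        ≤ (1/4 + ξ) * nX * nY * (nY * a ^ 2) := by
      calc ∑ y ∈ Finset.univ.filter (fun y => ¬ p y), f y ^ 2 * W y
          ≤ ∑ y ∈ Finset.univ.filter (fun y => ¬ p y), f y ^ 2 * ((1/4 + ξ) * nX * nY) := by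
            refine Finset.sum_le_sum fun y hy => ?_
            have hy' : ¬ p y := (Finset.mem_filter.mp hy).2
            have : W y ≤ (1/4 + ξ) * nX * nY := not_lt.mp hy'
            exact mul_le_mul_of_nonneg_left this (sq_nonneg _)
        _ ≤ ∑ y : Y, f y ^ 2 * ((1/4 + ξ) * nX * nY) := by
            refine Finset.sum_le_sum_of_subset_of_nonneg (Finset.filter_subset _ _)
              fun y _ _ => ?_
            have : (0:ℝ) ≤ (1/4 + ξ) * nX * nY := by positivity
            positivity
        _ = (∑ y : Y, f y ^ 2) * ((1/4 + ξ) * nX * nY) := by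
            rw [Finset.sum_mul]
        _ = (1/4 + ξ) * nX * nY * (nY * a ^ 2) := by
            rw [haa]; ring
    linarith
  have hfin : (1/4 + ξ) * nX * nY * (nY * a ^ 2) + (ξ * nY) * (M ^ 2 * (nX * nY))
      = ((1/4 + ξ) * a ^ 2 + ξ * M ^ 2) * nX * nY ^ 2 := by ring
  linarith
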